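/- For the sequence Z with Z_0 = 1, Z_1 = a, Z_{n+1} = a·Z_n + b·Z_{n-1} (0 < a < 1, b > 1 - a), the relative partial sums converge: lim_{n→∞} (1/Z_n)·∑_{k=0}^{n-1} Z_k = 1/(λ₁ - 1), where λ₁ = (a + √(a²+4b))/2. -/

import Mathlib

open Filter

theorem stmt_6 (a b : ℝ) (ha0 : 0 < a) (ha1 : a < 1) (hb : a + b > 1)
    (Z : ℕ → ℝ) (hZ0 : Z 0 = 1) (hZ1 : Z 1 = a)
    (hrec : ∀ n : ℕ, 1 ≤ n → Z (n + 1) = a * Z n + b * Z (n - 1)) :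
    Tendsto (fun n : ℕ => (∑ k ∈ Finset.range n, Z k) / Z n) atTop
      (nhds (1 / ((a + Real.sqrt (a ^ 2 + 4 * b)) / 2 - 1))) := by
  have hb0 : 0 < b := by linarith
  set D := Real.sqrt (a ^ 2 + 4 * b) with hD
  have hq : (0:ℝ) < a ^ 2 + 4 * b := by nlinarith
  have hDpos : 0 < D := Real.sqrt_pos.mpr hq
  have hDsq : D ^ 2 = a ^ 2 + 4 * b := Real.sq_sqrt hq.le
  set l1 := (a + D) / 2 with hl1
  set l2 := (a - D) / 2 with hl2
  have hdiff : l1 - l2 = D := by rw [hl1, hl2]; ring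
  have hsum : l1 + l2 = a := by rw [hl1, hl2]; ring
  have hprod : l1 * l2 = -b := by rw [hl1, hl2]; linear_combination (-1/4 : ℝ) * hDsq
  have hDa : a < D := by nlinarith [hDsq, hDpos]
  have hl2neg : l2 < 0 := by rw [hl2]; linarith
  have hl1gt1 : 1 < l1 := by rw [hl1]; nlinarith [hDsq, hDpos]
  have habs : -l1 < l2 := by rw [hl1, hl2]; linarith
  have hl1pos : 0 < l1 := by linarith
  have hchar1 : l1 ^ 2 = a * l1 + b := by linear_combination l1 * hsum - hprod
  have hchar2 : l2 ^ 2 = a * l2 + b := by linear_combination l2 * hsum - hprod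
  have hDne : D ≠ 0 := ne_of_gt hDpos
  have key : ∀ n, Z n * D = l1 ^ (n + 1) - l2 ^ (n + 1) := by
    intro n
    induction n using Nat.strong_induction_on with
    | _ n ih =>
      match n, ih with
      | 0, _ => rw [hZ0]; linear_combination -hdiff
      | 1, _ => rw [hZ1]; linear_combination -hchar1 + hchar2 - a * hdiff
      | (m + 2), ih =>
        have h1 := ih (m + 1) (by omega)
        have h0 := ih m (by omega)
        have hr := hrec (m + 1) (by omega)
        simp only [Nat.add_sub_cancel] at hr
        rw [hr]
        linear_combination a * h1 + b * h0 - l1 ^ (m + 1) * hchar1 + l2 ^ (m + 1) * hchar2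
  have hl2abs : |l2| < l1 := abs_lt.mpr ⟨by linarith, by linarith⟩
  have hZpos : ∀ n, 0 < Z n := by
    intro n
    have h2 : |l2 ^ (n + 1)| < l1 ^ (n + 1) := by
      rw [abs_pow]
      exact pow_lt_pow_left₀ hl2abs (abs_nonneg _) (by omega)
    nlinarith [le_abs_self (l2 ^ (n + 1)), key n]
  have hl1ne1 : l1 ≠ 1 := ne_of_gt hl1gt1
  have hl2ne1 : l2 ≠ 1 := ne_of_lt (by linarith)
  have hS : ∀ n, (∑ k ∈ Finset.range n, Z k) * D
      = l1 * ((l1 ^ n - 1) / (l1 - 1)) - l2 * ((l2 ^ n - 1) / (l2 - 1)) := by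
    intro n
    rw [Finset.sum_mul]
    calc ∑ k ∈ Finset.range n, Z k * D
        = ∑ k ∈ Finset.range n, (l1 ^ (k + 1) - l2 ^ (k + 1)) :=
          Finset.sum_congr rfl fun k _ => key k
      _ = l1 * ∑ k ∈ Finset.range n, l1 ^ k - l2 * ∑ k ∈ Finset.range n, l2 ^ k := by
          rw [Finset.sum_sub_distrib, Finset.mul_sum, Finset.mul_sum]
          congr 1 <;> exact Finset.sum_congr rfl fun k _ => by ring
      _ = _ := by rw [geom_sum_eq hl1ne1 n, geom_sum_eq hl2ne1 n]
  have hl1ne : l1 ≠ 0 := ne_of_gt hl1pos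
  have hratio : |l2 / l1| < 1 := by
    rw [abs_div, abs_of_pos hl1pos]
    exact (div_lt_one hl1pos).mpr hl2abs
  have hrewrite : ∀ n : ℕ, (∑ k ∈ Finset.range n, Z k) / Z n
      = ((1 - (l1⁻¹) ^ n) / (l1 - 1) - (l2 / l1) * (((l2 / l1) ^ n - (l1⁻¹) ^ n) / (l2 - 1)))
        / (1 - (l2 / l1) * (l2 / l1) ^ n) := by
    intro n
    have hZne : Z n ≠ 0 := ne_of_gt (hZpos n)
    have hden1 : l1 ^ (n + 1) - l2 ^ (n + 1) ≠ 0 := by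
      have := key n
      nlinarith [hZpos n, hDpos]
    have h1 : |(l2 / l1) ^ (n + 1)| < 1 := by
      rw [abs_pow]; exact pow_lt_one₀ (abs_nonneg _) hratio (by omega)
    have h2 : (l2 / l1) ^ (n + 1) < 1 := lt_of_le_of_lt (le_abs_self _) h1
    have hden2 : 1 - (l2 / l1) * (l2 / l1) ^ n ≠ 0 := by
      have h3 : (l2 / l1) * (l2 / l1) ^ n = (l2 / l1) ^ (n + 1) := (pow_succ' _ _).symm
      rw [h3]
      exact ne_of_gt (by linarith)
    have e1 : Z n = (l1 ^ (n + 1) - l2 ^ (n + 1)) / D := by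
      rw [eq_div_iff hDne]; exact key n
    have e2 : (∑ k ∈ Finset.range n, Z k)
        = (l1 * ((l1 ^ n - 1) / (l1 - 1)) - l2 * ((l2 ^ n - 1) / (l2 - 1))) / D := by
      rw [eq_div_iff hDne]; exact hS n
    rw [e1, e2]
    have hl1s : l1 - 1 ≠ 0 := sub_ne_zero.mpr hl1ne1
    have hl2s : l2 - 1 ≠ 0 := sub_ne_zero.mpr hl2ne1
    have hl1pow : l1 ^ n ≠ 0 := pow_ne_zero _ hl1ne
    rw [div_eq_div_iff (div_ne_zero hden1 hDne) hden2]
    simp only [inv_pow, div_pow, pow_succ]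
    generalize l1 ^ n = x at hl1pow ⊢
    generalize l2 ^ n = y
    field_simp
  have hx : Tendsto (fun n : ℕ => (l1⁻¹) ^ n) atTop (nhds 0) :=
    tendsto_pow_atTop_nhds_zero_of_abs_lt_one
      (by rw [abs_inv, abs_of_pos hl1pos]; exact inv_lt_one_of_one_lt₀ hl1gt1)
  have hy : Tendsto (fun n : ℕ => (l2 / l1) ^ n) atTop (nhds 0) :=
    tendsto_pow_atTop_nhds_zero_of_abs_lt_one hratio
  have hnum : Tendsto (fun n : ℕ =>
      (1 - (l1⁻¹) ^ n) / (l1 - 1) - (l2 / l1) * (((l2 / l1) ^ n - (l1⁻¹) ^ n) / (l2 - 1)))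
      atTop (nhds (1 / (l1 - 1))) := by
    have hone : Tendsto (fun _ : ℕ => (1:ℝ)) atTop (nhds 1) := tendsto_const_nhds
    have h := ((hone.sub hx).div_const (l1 - 1)).sub
      (((hy.sub hx).div_const (l2 - 1)).const_mul (l2 / l1))
    simpa using h
  have hden : Tendsto (fun n : ℕ => 1 - (l2 / l1) * (l2 / l1) ^ n) atTop (nhds 1) := by
    have hone : Tendsto (fun _ : ℕ => (1:ℝ)) atTop (nhds 1) := tendsto_const_nhds
    have h := hone.sub (hy.const_mul (l2 / l1))
    simpa using h
  have hmain := hnum.div hden one_ne_zero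
  simp only [div_one] at hmain
  have heq : (fun n : ℕ => (∑ k ∈ Finset.range n, Z k) / Z n)
      = fun n : ℕ => ((1 - (l1⁻¹) ^ n) / (l1 - 1)
          - (l2 / l1) * (((l2 / l1) ^ n - (l1⁻¹) ^ n) / (l2 - 1)))
        / (1 - (l2 / l1) * (l2 / l1) ^ n) := funext hrewrite
  rw [heq]
  exact hmain
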